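/- (Main convergence theorem, accelerated sketch-and-project.) In the projection mixture setup, let ν > 0 satisfy Σ_{i=1}^m p_i Z_i G⁻¹ Z_i ⪯ ν G and μ ≤ ν, where μ = λ_min(G) > 0. Fix x*, x₀ ∈ E and set β := 1 − √(μ/ν), γ := 1/√(μν), α := 1/(1 + γν). Run the accelerated iteration along index sequences: v₀ := x₀, y_k := α v_k + (1−α) x_k, g_k := Z_{ω_k}(y_k − x*), x_{k+1} := y_k − g_k, v_{k+1} := β v_k + (1−β) y_k − γ g_k. Then for every k ∈ ℕ, Σ_{ω ∈ {1,…,m}^k} (∏_{j=0}^{k−1} p_{ω_j}) [ ⟨G⁻¹(v_k − x*), v_k − x*⟩ + (1/μ)‖x_k − x*‖² ] ≤ (1 − √(μ/ν))^k · ( ⟨G⁻¹(x₀ − x*), x₀ − x*⟩ + (1/μ)‖x₀ − x*‖² ), where x_k, v_k denote the iterates produced by the first k entries of ω. -/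

import Mathlib

open RealInnerProductSpace Finset

/-- The accelerated sketch-and-project iteration (Algorithm 1), driven by a finite
index sequence `ω : Fin k → Fin m`.  The value at `k` is the pair `(x_k, v_k)`:
`v₀ := x₀`, `y_k := α v_k + (1−α) x_k`, `g_k := Z_{ω_k}(y_k − x*)`,
`x_{k+1} := y_k − g_k`, `v_{k+1} := β v_k + (1−β) y_k − γ g_k`. -/
noncomputable def accelIter {E : Type*} [NormedAddCommGroup E] [InnerProductSpace ℝ E]
    {m : ℕ} (Z : Fin m → E →ₗ[ℝ] E) (xstar x₀ : E) (α β γ : ℝ) :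
    (k : ℕ) → (Fin k → Fin m) → E × E
  | 0, _ => (x₀, x₀)
  | (k + 1), ω =>
      let prev := accelIter Z xstar x₀ α β γ k (fun j => ω j.castSucc)
      let y := α • prev.2 + (1 - α) • prev.1
      let g := Z (ω (Fin.last k)) (y - xstar)
      (y - g, β • prev.2 + (1 - β) • y - γ • g)

section Helpers
variable {E : Type*} [NormedAddCommGroup E] [InnerProductSpace ℝ E]

lemma aux_ginv_symm (G Ginv : E →ₗ[ℝ] E) (hGsym : G.IsSymmetric)
    (hGinv2 : G ∘ₗ Ginv = LinearMap.id) : Ginv.IsSymmetric := by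
  intro u w
  have h1 : G (Ginv u) = u := by rw [← LinearMap.comp_apply, hGinv2]; rfl
  have h2 : G (Ginv w) = w := by rw [← LinearMap.comp_apply, hGinv2]; rfl
  calc ⟪Ginv u, w⟫ = ⟪Ginv u, G (Ginv w)⟫ := by rw [h2]
    _ = ⟪G (Ginv u), Ginv w⟫ := (hGsym _ _).symm
    _ = ⟪u, Ginv w⟫ := by rw [h1]

lemma aux_ginv_nonneg (G Ginv : E →ₗ[ℝ] E) (μ : ℝ)
    (hμ1 : ∀ x : E, μ * ‖x‖ ^ 2 ≤ ⟪G x, x⟫) (hμpos : 0 < μ)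
    (hGinv2 : G ∘ₗ Ginv = LinearMap.id) (u : E) : 0 ≤ ⟪Ginv u, u⟫ := by
  have h1 : G (Ginv u) = u := by rw [← LinearMap.comp_apply, hGinv2]; rfl
  have hc : ⟪Ginv u, u⟫ = ⟪G (Ginv u), Ginv u⟫ := by rw [h1, real_inner_comm]
  nlinarith [hμ1 (Ginv u), sq_nonneg ‖Ginv u‖]

lemma aux_ginv_upper (G Ginv : E →ₗ[ℝ] E) (μ : ℝ) (hμpos : 0 < μ)
    (hμ1 : ∀ x : E, μ * ‖x‖ ^ 2 ≤ ⟪G x, x⟫)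
    (hGinv2 : G ∘ₗ Ginv = LinearMap.id) (u : E) :
    ⟪Ginv u, u⟫ ≤ (1/μ) * ‖u‖^2 := by
  set w := Ginv u with hw
  have h1 : G w = u := by rw [hw, ← LinearMap.comp_apply, hGinv2]; rfl
  have hb : 0 ≤ ⟪G w - μ • w, G w⟫ := by
    have e1 : ⟪G w - μ • w, G w⟫
        = ⟪G w - μ • w, G w - μ • w⟫ + μ * ⟪G w - μ • w, w⟫ := by
      simp only [inner_sub_left, inner_sub_right, real_inner_smul_left, real_inner_smul_right]
      ring
    have e2 : 0 ≤ ⟪G w - μ • w, w⟫ := by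
      simp only [inner_sub_left, real_inner_smul_left]
      nlinarith [hμ1 w, real_inner_self_eq_norm_sq w]
    nlinarith [real_inner_self_nonneg (x := G w - μ • w)]
  have hb2 : μ * ⟪w, G w⟫ ≤ ‖G w‖^2 := by
    have e3 : ⟪G w - μ • w, G w⟫ = ⟪G w, G w⟫ - μ * ⟪w, G w⟫ := by
      simp [inner_sub_left, real_inner_smul_left]
    rw [e3, real_inner_self_eq_norm_sq] at hb
    linarith
  have hc : ⟪Ginv u, u⟫ = ⟪w, G w⟫ := by rw [h1]
  rw [hc, ← h1, div_mul_eq_mul_div, le_div_iff₀ hμpos]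
  nlinarith

set_option maxHeartbeats 1000000 in
lemma one_step {m : ℕ}
    (Z : Fin m → E →ₗ[ℝ] E) (hZsym : ∀ i, (Z i).IsSymmetric)
    (hZidem : ∀ i, Z i ∘ₗ Z i = Z i)
    (p : Fin m → ℝ) (hp : ∀ i, 0 ≤ p i) (hps : ∑ i, p i = 1)
    (G : E →ₗ[ℝ] E) (hG : G = ∑ i, p i • Z i)
    (Ginv : E →ₗ[ℝ] E) (hGinv1 : Ginv ∘ₗ G = LinearMap.id)
    (hGinv2 : G ∘ₗ Ginv = LinearMap.id)
    (μ ν : ℝ) (hμpos : 0 < μ)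
    (hμ1 : ∀ x : E, μ * ‖x‖ ^ 2 ≤ ⟪G x, x⟫)
    (hνpos : 0 < ν)
    (hν : ∀ x : E, ∑ i, p i * ⟪Ginv (Z i x), Z i x⟫ ≤ ν * ⟪G x, x⟫)
    (hμν : μ ≤ ν)
    (xstar : E) (α β γ : ℝ)
    (hβ : β = 1 - Real.sqrt (μ / ν)) (hγ : γ = 1 / Real.sqrt (μ * ν))
    (hα : α = 1 / (1 + γ * ν)) (x v : E) :
    ∑ i : Fin m, p i *
        (⟪Ginv (β • v + (1 - β) • (α • v + (1 - α) • x)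
              - γ • Z i (α • v + (1 - α) • x - xstar) - xstar),
            β • v + (1 - β) • (α • v + (1 - α) • x)
              - γ • Z i (α • v + (1 - α) • x - xstar) - xstar⟫
          + (1 / μ) * ‖α • v + (1 - α) • x
              - Z i (α • v + (1 - α) • x - xstar) - xstar‖ ^ 2)
      ≤ β * (⟪Ginv (v - xstar), v - xstar⟫ + (1 / μ) * ‖x - xstar‖ ^ 2) := by
  -- parameter facts
  set s := Real.sqrt (μ / ν) with hs_def
  have hs0 : 0 < s := Real.sqrt_pos.2 (div_pos hμpos hνpos)
  have hs1 : s ≤ 1 := by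
    rw [hs_def, show (1:ℝ) = Real.sqrt 1 by simp]
    exact Real.sqrt_le_sqrt (by rw [div_le_one hνpos]; exact hμν)
  have hsq : s^2 = μ/ν := Real.sq_sqrt (le_of_lt (div_pos hμpos hνpos))
  have hmn0 : (0:ℝ) < μ * ν := mul_pos hμpos hνpos
  have hsq2 : (Real.sqrt (μ*ν))^2 = μ*ν := Real.sq_sqrt hmn0.le
  have hsqpos : 0 < Real.sqrt (μ*ν) := Real.sqrt_pos.2 hmn0
  have hmn : Real.sqrt (μ*ν) * s = μ := by
    rw [hs_def, ← Real.sqrt_mul hmn0.le,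
      show μ*ν*(μ/ν) = μ^2 by field_simp]
    exact Real.sqrt_sq hμpos.le
  have hγμ : γ * μ = s := by
    rw [hγ, one_div, inv_mul_eq_div, div_eq_iff hsqpos.ne']
    linarith [hmn]
  have hγs : γ = s/μ := by
    rw [eq_div_iff hμpos.ne']; exact hγμ
  have hγ2 : γ^2 * ν = 1/μ := by
    rw [hγ, div_pow, one_pow, hsq2]; field_simp
  have hγν : γ * ν * s = 1 := by
    have h1 : ν * s^2 = μ := by rw [hsq]; field_simp
    have h2 : γ * ν * s * s = s := by
      calc γ * ν * s * s = γ * (ν * s^2) := by ring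
        _ = γ * μ := by rw [h1]
        _ = s := hγμ
    exact mul_right_cancel₀ (ne_of_gt hs0) (by rw [one_mul]; exact h2)
  have hγν0 : 0 < γ * ν := by nlinarith only [hγν, hs0]
  have hα0 : 0 < α := by
    rw [hα]; positivity
  have hαs : α * (1 + s) = s := by
    rw [hα]
    have hne : (1 + γ * ν) ≠ 0 := by positivity
    rw [div_mul_eq_mul_div, div_eq_iff hne]
    linear_combination -hγν
  have hβs : β = 1 - s := hβ
  clear_value s
  -- symmetry facts
  have hGsym : G.IsSymmetric := by
    intro a b
    rw [hG]
    simp only [LinearMap.sum_apply, LinearMap.smul_apply, sum_inner, inner_sum,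
      real_inner_smul_left, real_inner_smul_right]
    exact Finset.sum_congr rfl fun i _ => by rw [hZsym i a b]
  have hGinvSym : Ginv.IsSymmetric := aux_ginv_symm G Ginv hGsym hGinv2
  have hGidinv : ∀ u : E, Ginv (G u) = u := fun u => by
    rw [← LinearMap.comp_apply, hGinv1]; rfl
  -- vectors
  set d : E := v - xstar with hd_def
  set r : E := x - xstar with hr_def
  set e : E := α • d + (1 - α) • r with he_def
  have harg : α • v + (1 - α) • x - xstar = e := by
    rw [he_def, hd_def, hr_def]; module
  have hvec1 : ∀ i : Fin m,
      β • v + (1 - β) • (α • v + (1 - α) • x)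
        - γ • Z i (α • v + (1 - α) • x - xstar) - xstar
      = (β • d + (1 - β) • e) - γ • Z i e := by
    intro i
    rw [harg, he_def, hd_def, hr_def]; module
  have hvec2 : ∀ i : Fin m,
      α • v + (1 - α) • x - Z i (α • v + (1 - α) • x - xstar) - xstar
      = e - Z i e := by
    intro i
    rw [harg, he_def, hd_def, hr_def]; module
  set w : E := β • d + (1 - β) • e with hw_def
  -- scalar abbreviations
  set Qd := ⟪Ginv d, d⟫ with hQd
  set Qe := ⟪Ginv e, e⟫ with hQe
  set Qw := ⟪Ginv w, w⟫ with hQw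
  set de := ⟪d, e⟫ with hde_def
  set re := ⟪r, e⟫ with hre_def
  set Ee := ‖e‖^2 with hEe
  set Rr := ‖r‖^2 with hRr
  clear_value d r e w Qd Qe Qw de re Ee Rr
  -- per-index expansions
  have hexp : ∀ i : Fin m,
      ⟪Ginv (w - γ • Z i e), w - γ • Z i e⟫
        = Qw - 2*γ*⟪Ginv w, Z i e⟫ + γ^2 * ⟪Ginv (Z i e), Z i e⟫ := by
    intro i
    have hsymm : ⟪Ginv (Z i e), w⟫ = ⟪Ginv w, Z i e⟫ := by
      rw [hGinvSym (Z i e) w, real_inner_comm]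
    simp only [map_sub, map_smul, inner_sub_left, inner_sub_right,
      real_inner_smul_left, real_inner_smul_right]
    rw [hQw, hsymm]; ring
  have hnorm : ∀ i : Fin m, ‖e - Z i e‖^2 = Ee - ⟪Z i e, e⟫ := by
    intro i
    have hid : Z i (Z i e) = Z i e := by rw [← LinearMap.comp_apply, hZidem]
    have hz2 : ⟪Z i e, Z i e⟫ = ⟪Z i e, e⟫ := by
      calc ⟪Z i e, Z i e⟫ = ⟪e, Z i (Z i e)⟫ := hZsym i e (Z i e)
        _ = ⟪e, Z i e⟫ := by rw [hid]
        _ = ⟪Z i e, e⟫ := real_inner_comm _ _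
    have hcm : ⟪e, Z i e⟫ = ⟪Z i e, e⟫ := real_inner_comm _ _
    rw [norm_sub_sq_real, ← real_inner_self_eq_norm_sq (Z i e), hz2, hcm, hEe]
    ring
  -- sum identities
  have hGe : ∀ u : E, G u = ∑ i, p i • Z i u := by
    intro u; rw [hG]; simp [LinearMap.sum_apply, LinearMap.smul_apply]
  have hsum1 : ∑ i, p i * ⟪Ginv w, Z i e⟫ = ⟪Ginv w, G e⟫ := by
    rw [hGe e, inner_sum]
    exact Finset.sum_congr rfl fun i _ => (real_inner_smul_right _ _ _).symm
  have hsum2 : ∑ i, p i * ⟪Z i e, e⟫ = ⟪G e, e⟫ := by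
    rw [hGe e, sum_inner]
    exact Finset.sum_congr rfl fun i _ => (real_inner_smul_left _ _ _).symm
  have hptw : ∀ i : Fin m,
      p i * (⟪Ginv (w - γ • Z i e), w - γ • Z i e⟫ + (1/μ) * ‖e - Z i e‖^2)
      = p i * Qw - 2*γ*(p i * ⟪Ginv w, Z i e⟫)
          + γ^2*(p i * ⟪Ginv (Z i e), Z i e⟫)
          + (1/μ)*(p i * Ee) - (1/μ)*(p i * ⟪Z i e, e⟫) := by
    intro i; rw [hexp i, hnorm i]; ring
  have E1 : ∑ i : Fin m, p i * Qw = Qw := by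
    rw [← Finset.sum_mul, hps, one_mul]
  have E2 : ∑ i : Fin m, 2*γ*(p i * ⟪Ginv w, Z i e⟫) = 2*γ*⟪Ginv w, G e⟫ := by
    rw [← Finset.mul_sum, hsum1]
  have E3 : ∑ i : Fin m, γ^2*(p i * ⟪Ginv (Z i e), Z i e⟫)
      = γ^2 * ∑ i, p i * ⟪Ginv (Z i e), Z i e⟫ := (Finset.mul_sum _ _ _).symm
  have E4 : ∑ i : Fin m, (1/μ)*(p i * Ee) = (1/μ)*Ee := by
    rw [← Finset.mul_sum, ← Finset.sum_mul, hps, one_mul]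
  have E5 : ∑ i : Fin m, (1/μ)*(p i * ⟪Z i e, e⟫) = (1/μ)*⟪G e, e⟫ := by
    rw [← Finset.mul_sum, hsum2]
  have hsum_main :
      ∑ i : Fin m, p i * (⟪Ginv (w - γ • Z i e), w - γ • Z i e⟫ + (1/μ) * ‖e - Z i e‖^2)
        = Qw - 2*γ*⟪Ginv w, G e⟫ + γ^2 * (∑ i, p i * ⟪Ginv (Z i e), Z i e⟫)
          + (1/μ)*Ee - (1/μ)*⟪G e, e⟫ := by
    rw [Finset.sum_congr rfl (fun i _ => hptw i)]
    simp only [Finset.sum_sub_distrib, Finset.sum_add_distrib]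
    rw [E1, E2, E3, E4, E5]
  -- the inequalities
  have hwge : ⟪Ginv w, G e⟫ = ⟪w, e⟫ := by
    rw [hGinvSym w (G e), hGidinv e]
  have hνe : γ^2 * (∑ i, p i * ⟪Ginv (Z i e), Z i e⟫) ≤ (1/μ) * ⟪G e, e⟫ := by
    calc γ^2 * (∑ i, p i * ⟪Ginv (Z i e), Z i e⟫) ≤ γ^2 * (ν * ⟪G e, e⟫) :=
          mul_le_mul_of_nonneg_left (hν e) (sq_nonneg γ)
      _ = (γ^2 * ν) * ⟪G e, e⟫ := by ring
      _ = (1/μ) * ⟪G e, e⟫ := by rw [hγ2]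
  have hwe : ⟪w, e⟫ = β*de + (1-β)*Ee := by
    rw [hw_def]
    simp only [inner_add_left, real_inner_smul_left]
    rw [real_inner_self_eq_norm_sq, hde_def, hEe]
  have hQwexp : Qw = β^2*Qd + 2*(β*(1-β))*⟪Ginv d, e⟫ + (1-β)^2*Qe := by
    have hsymm : ⟪Ginv e, d⟫ = ⟪Ginv d, e⟫ := by
      rw [hGinvSym e d, real_inner_comm]
    rw [hQw, hQd, hQe, hw_def]
    simp only [map_add, map_smul, inner_add_left, inner_add_right,
      real_inner_smul_left, real_inner_smul_right]
    rw [hsymm]; ring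
  have hcau : 2*⟪Ginv d, e⟫ ≤ Qd + Qe := by
    have h0 : 0 ≤ ⟪Ginv (d - e), d - e⟫ :=
      aux_ginv_nonneg G Ginv μ hμ1 hμpos hGinv2 (d - e)
    have hsymm : ⟪Ginv e, d⟫ = ⟪Ginv d, e⟫ := by
      rw [hGinvSym e d, real_inner_comm]
    have hex : ⟪Ginv (d - e), d - e⟫ = Qd - 2*⟪Ginv d, e⟫ + Qe := by
      simp only [map_sub, inner_sub_left, inner_sub_right]
      rw [hsymm, hQd, hQe]; ring
    linarith only [hex ▸ h0]
  have hQwle : Qw ≤ β*Qd + (1-β)*Qe := by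
    have hββ : 0 ≤ β*(1-β) :=
      mul_nonneg (by rw [hβs]; linarith) (by rw [hβs]; linarith)
    linarith only [mul_le_mul_of_nonneg_left hcau hββ, hQwexp]
  have hQele : Qe ≤ (1/μ)*Ee := by
    rw [hQe, hEe]; exact aux_ginv_upper G Ginv μ hμpos hμ1 hGinv2 e
  -- the key scalar inequality
  have hdee : α*de = Ee - (1-α)*re := by
    have h1 : ⟪e, e⟫ = α*de + (1-α)*re := by
      nth_rewrite 1 [he_def]
      simp only [inner_add_left, real_inner_smul_left]
      rw [hde_def, hre_def]
    rw [← real_inner_self_eq_norm_sq] at hEe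
    rw [hEe]; linarith only [h1]
  have h2 : 0 ≤ Rr - 2*re + Ee := by
    have := sq_nonneg ‖r - e‖
    rw [norm_sub_sq_real] at this
    rw [hRr, hEe, hre_def]; linarith only [this]
  have key : α*((1-s)*Rr - (s*Ee - 2*s*(1-s)*de - 2*s^2*Ee + Ee))
      = α*(1-s)*(Rr - 2*re + Ee) := by
    linear_combination (2*s*(1-s)) * hdee + (2*(1-s)*re - 2*(1-s)*Ee) * hαs
  have hQ' : s*Ee - 2*s*(1-s)*de - 2*s^2*Ee + Ee ≤ (1-s)*Rr := by
    have hpos : 0 ≤ α*(1-s)*(Rr - 2*re + Ee) :=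
      mul_nonneg (mul_nonneg hα0.le (by linarith only [hs1])) h2
    nlinarith only [key, hα0, hpos]
  have final_scalar : (1-β)*(1/μ)*Ee - 2*γ*(β*de + (1-β)*Ee) + (1/μ)*Ee
      ≤ β*(1/μ)*Rr := by
    rw [hβs, hγs]
    have hid : (1-(1-s))*(1/μ)*Ee - 2*(s/μ)*((1-s)*de + (1-(1-s))*Ee) + (1/μ)*Ee
        = (1/μ)*(s*Ee - 2*s*(1-s)*de - 2*s^2*Ee + Ee) := by
      field_simp; ring
    rw [hid]
    calc (1/μ)*(s*Ee - 2*s*(1-s)*de - 2*s^2*Ee + Ee)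
        ≤ (1/μ)*((1-s)*Rr) := by
          apply mul_le_mul_of_nonneg_left hQ' (by positivity)
      _ = (1-s)*(1/μ)*Rr := by ring
  -- assemble
  simp only [hvec1, hvec2]
  rw [hsum_main, hwge, hwe]
  have h1β : (0:ℝ) ≤ 1 - β := by rw [hβs]; linarith
  have hD : (1-β)*Qe ≤ (1-β)*((1/μ)*Ee) :=
    mul_le_mul_of_nonneg_left hQele h1β
  linarith only [hνe, hQwle, hD, final_scalar]

end Helpers

/-- (Main convergence theorem, accelerated sketch-and-project.)
In the projection mixture setup, with μ = λ_min(G) > 0, ν ≥ μ satisfying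
Σ pᵢ Zᵢ G⁻¹ Zᵢ ⪯ ν G, and parameters β = 1 − √(μ/ν), γ = 1/√(μν), α = 1/(1+γν),
the expectation over the first k sampled indices of
⟨G⁻¹(v_k − x*), v_k − x*⟩ + (1/μ)‖x_k − x*‖² decays at rate (1 − √(μ/ν))^k. -/
theorem accelerated_sketch_and_project_convergence
    {E : Type*} [NormedAddCommGroup E] [InnerProductSpace ℝ E]
    [FiniteDimensional ℝ E] {m : ℕ}
    (Z : Fin m → E →ₗ[ℝ] E) (hZsym : ∀ i, (Z i).IsSymmetric)
    (hZidem : ∀ i, Z i ∘ₗ Z i = Z i)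
    (p : Fin m → ℝ) (hp : ∀ i, 0 ≤ p i) (hps : ∑ i, p i = 1)
    (G : E →ₗ[ℝ] E) (hG : G = ∑ i, p i • Z i)
    (Ginv : E →ₗ[ℝ] E) (hGinv1 : Ginv ∘ₗ G = LinearMap.id)
    (hGinv2 : G ∘ₗ Ginv = LinearMap.id)
    (μ ν : ℝ) (hμpos : 0 < μ)
    (hμ1 : ∀ x : E, μ * ‖x‖ ^ 2 ≤ ⟪G x, x⟫)
    (hμ2 : ∃ x : E, x ≠ 0 ∧ ⟪G x, x⟫ = μ * ‖x‖ ^ 2)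
    (hνpos : 0 < ν)
    (hν : ∀ x : E, ∑ i, p i * ⟪Ginv (Z i x), Z i x⟫ ≤ ν * ⟪G x, x⟫)
    (hμν : μ ≤ ν)
    (xstar x₀ : E) (α β γ : ℝ)
    (hβ : β = 1 - Real.sqrt (μ / ν)) (hγ : γ = 1 / Real.sqrt (μ * ν))
    (hα : α = 1 / (1 + γ * ν)) :
    ∀ k : ℕ,
      ∑ ω : Fin k → Fin m, (∏ j, p (ω j)) *
          (⟪Ginv ((accelIter Z xstar x₀ α β γ k ω).2 - xstar),
              (accelIter Z xstar x₀ α β γ k ω).2 - xstar⟫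
            + (1 / μ) * ‖(accelIter Z xstar x₀ α β γ k ω).1 - xstar‖ ^ 2)
        ≤ (1 - Real.sqrt (μ / ν)) ^ k *
            (⟪Ginv (x₀ - xstar), x₀ - xstar⟫ + (1 / μ) * ‖x₀ - xstar‖ ^ 2) := by
  have hs0 : 0 < Real.sqrt (μ / ν) := Real.sqrt_pos.2 (div_pos hμpos hνpos)
  have hs1 : Real.sqrt (μ / ν) ≤ 1 := by
    rw [show (1:ℝ) = Real.sqrt 1 by simp]
    exact Real.sqrt_le_sqrt (by rw [div_le_one hνpos]; exact hμν)
  have hβ0 : 0 ≤ β := by rw [hβ]; linarith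
  intro k
  induction k with
  | zero => simp [accelIter]
  | succ k IH =>
    rw [← hβ] at IH ⊢
    have hiter : ∀ (σ : Fin k → Fin m) (i : Fin m),
        accelIter Z xstar x₀ α β γ (k+1) (Fin.snoc σ i)
        = (α • (accelIter Z xstar x₀ α β γ k σ).2
              + (1-α) • (accelIter Z xstar x₀ α β γ k σ).1
            - Z i (α • (accelIter Z xstar x₀ α β γ k σ).2
              + (1-α) • (accelIter Z xstar x₀ α β γ k σ).1 - xstar),
           β • (accelIter Z xstar x₀ α β γ k σ).2
            + (1-β) • (α • (accelIter Z xstar x₀ α β γ k σ).2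
              + (1-α) • (accelIter Z xstar x₀ α β γ k σ).1)
            - γ • Z i (α • (accelIter Z xstar x₀ α β γ k σ).2
              + (1-α) • (accelIter Z xstar x₀ α β γ k σ).1 - xstar)) := by
      intro σ i
      simp only [accelIter, Fin.snoc_castSucc, Fin.snoc_last]
    have hprod : ∀ (σ : Fin k → Fin m) (i : Fin m),
        ∏ j : Fin (k+1), p ((Fin.snoc σ i : Fin (k+1) → Fin m) j)
          = (∏ j : Fin k, p (σ j)) * p i := by
      intro σ i
      rw [Fin.prod_univ_castSucc]
      simp [Fin.snoc_castSucc, Fin.snoc_last]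
    have hdecomp : ∀ f : (Fin (k+1) → Fin m) → ℝ,
        ∑ ω : Fin (k+1) → Fin m, f ω
          = ∑ i : Fin m, ∑ σ : Fin k → Fin m, f (Fin.snoc σ i) := by
      intro f
      calc ∑ ω : Fin (k+1) → Fin m, f ω
          = ∑ q : Fin m × (Fin k → Fin m), f (Fin.snoc q.2 q.1) :=
            (Fintype.sum_equiv (Fin.snocEquiv (fun _ => Fin m))
              (fun q => f (Fin.snoc q.2 q.1)) f (fun q => rfl)).symm
        _ = ∑ i : Fin m, ∑ σ : Fin k → Fin m, f (Fin.snoc σ i) :=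
            Fintype.sum_prod_type _
    rw [hdecomp, Finset.sum_comm]
    calc ∑ σ : Fin k → Fin m, ∑ i : Fin m,
          (∏ j, p ((Fin.snoc σ i : Fin (k+1) → Fin m) j)) *
            (⟪Ginv ((accelIter Z xstar x₀ α β γ (k+1) (Fin.snoc σ i)).2 - xstar),
                (accelIter Z xstar x₀ α β γ (k+1) (Fin.snoc σ i)).2 - xstar⟫
              + (1 / μ) * ‖(accelIter Z xstar x₀ α β γ (k+1) (Fin.snoc σ i)).1 - xstar‖ ^ 2)
        = ∑ σ : Fin k → Fin m, (∏ j, p (σ j)) *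
            ∑ i : Fin m, p i *
              (⟪Ginv (β • (accelIter Z xstar x₀ α β γ k σ).2
                    + (1 - β) • (α • (accelIter Z xstar x₀ α β γ k σ).2
                      + (1 - α) • (accelIter Z xstar x₀ α β γ k σ).1)
                    - γ • Z i (α • (accelIter Z xstar x₀ α β γ k σ).2
                      + (1 - α) • (accelIter Z xstar x₀ α β γ k σ).1 - xstar) - xstar),
                  β • (accelIter Z xstar x₀ α β γ k σ).2
                    + (1 - β) • (α • (accelIter Z xstar x₀ α β γ k σ).2
                      + (1 - α) • (accelIter Z xstar x₀ α β γ k σ).1)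
                    - γ • Z i (α • (accelIter Z xstar x₀ α β γ k σ).2
                      + (1 - α) • (accelIter Z xstar x₀ α β γ k σ).1 - xstar) - xstar⟫
                + (1 / μ) * ‖α • (accelIter Z xstar x₀ α β γ k σ).2
                    + (1 - α) • (accelIter Z xstar x₀ α β γ k σ).1
                    - Z i (α • (accelIter Z xstar x₀ α β γ k σ).2
                      + (1 - α) • (accelIter Z xstar x₀ α β γ k σ).1 - xstar) - xstar‖ ^ 2) := by
          refine Finset.sum_congr rfl fun σ _ => ?_
          rw [Finset.mul_sum]
          refine Finset.sum_congr rfl fun i _ => ?_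
          rw [hprod σ i, hiter σ i]
          ring_nf
      _ ≤ ∑ σ : Fin k → Fin m, (∏ j, p (σ j)) *
            (β * (⟪Ginv ((accelIter Z xstar x₀ α β γ k σ).2 - xstar),
                (accelIter Z xstar x₀ α β γ k σ).2 - xstar⟫
              + (1 / μ) * ‖(accelIter Z xstar x₀ α β γ k σ).1 - xstar‖ ^ 2)) := by
          refine Finset.sum_le_sum fun σ _ => ?_
          refine mul_le_mul_of_nonneg_left ?_ (Finset.prod_nonneg fun j _ => hp _)
          exact one_step Z hZsym hZidem p hp hps G hG Ginv hGinv1 hGinv2 μ ν hμpos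
            hμ1 hνpos hν hμν xstar α β γ hβ hγ hα
            (accelIter Z xstar x₀ α β γ k σ).1 (accelIter Z xstar x₀ α β γ k σ).2
      _ = β * ∑ σ : Fin k → Fin m, (∏ j, p (σ j)) *
            (⟪Ginv ((accelIter Z xstar x₀ α β γ k σ).2 - xstar),
                (accelIter Z xstar x₀ α β γ k σ).2 - xstar⟫
              + (1 / μ) * ‖(accelIter Z xstar x₀ α β γ k σ).1 - xstar‖ ^ 2) := by
          rw [Finset.mul_sum]
          exact Finset.sum_congr rfl fun σ _ => by ring
      _ ≤ β * (β ^ k *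
            (⟪Ginv (x₀ - xstar), x₀ - xstar⟫ + (1 / μ) * ‖x₀ - xstar‖ ^ 2)) :=
          mul_le_mul_of_nonneg_left IH hβ0
      _ = β ^ (k+1) *
            (⟪Ginv (x₀ - xstar), x₀ - xstar⟫ + (1 / μ) * ‖x₀ - xstar‖ ^ 2) := by
          ring
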